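/- Let d ≥ 1 and let f : ℝ^d → ℝ be twice continuously differentiable, with gradient ∇f and Hessian H(y) at each point y. Let x, v, v_ne ∈ ℝ^d, let ε' ≥ 0, and assume: (i) H(x) and H(x+v) are positive definite; (ii) H(x)·v_ne = -∇f(x); (iii) with λ := √(v_neᵀ H(x) v_ne), one has (1+ε')·λ < 1; (iv) √((v - v_ne)ᵀ H(x) (v - v_ne)) ≤ ε'·λ; (v) for every s ∈ [0,1], (1 - s(1+ε')λ)²·H(x) ⪯ H(x+sv) ⪯ (1 - s(1+ε')λ)^{-2}·H(x). Then the Newton decrement at x+v satisfies √( ∇f(x+v)ᵀ H(x+v)^{-1} ∇f(x+v) ) ≤ ((1+ε')·λ² + ε'·λ) / (1 - (1+ε')·λ)². (Inequality (intermediateboundnewtondecrement) established in the proof of Lemma 3, with the self-concordance sandwich relation (v) taken as hypothesis.) -/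

import Mathlib

open Matrix

/-- The continuous linear map `u ↦ w ⬝ᵥ u`, representing the gradient vector `w`. -/
noncomputable def dotCLM {d : ℕ} (w : Fin d → ℝ) : (Fin d → ℝ) →L[ℝ] ℝ :=
  LinearMap.toContinuousLinearMap
    { toFun := fun u => w ⬝ᵥ u
      map_add' := fun u v => by simp [dotProduct_add]
      map_smul' := fun c u => by simp [dotProduct_smul] }

/-- The continuous linear map `u ↦ M *ᵥ u`, representing the Hessian matrix `M`. -/
noncomputable def mulVecCLM {d : ℕ} (M : Matrix (Fin d) (Fin d) ℝ) :
    (Fin d → ℝ) →L[ℝ] (Fin d → ℝ) :=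
  LinearMap.toContinuousLinearMap M.mulVecLin


-- scalar quadratic facts for PSD/PD matrices over ℝ
section helpers
variable {d : ℕ}

lemma herm_swap {M : Matrix (Fin d) (Fin d) ℝ} (hM : M.IsHermitian)
    (u w : Fin d → ℝ) : u ⬝ᵥ M *ᵥ w = w ⬝ᵥ M *ᵥ u := by
  have ht : Mᵀ = M := by
    have := hM.eq
    rwa [Matrix.conjTranspose_eq_transpose_of_trivial] at this
  calc u ⬝ᵥ M *ᵥ w = (u ᵥ* M) ⬝ᵥ w := by rw [Matrix.dotProduct_mulVec]
    _ = (Mᵀ *ᵥ u) ⬝ᵥ w := by rw [Matrix.mulVec_transpose]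
    _ = (M *ᵥ u) ⬝ᵥ w := by rw [ht]
    _ = w ⬝ᵥ M *ᵥ u := by rw [dotProduct_comm]

lemma psd_nonneg {M : Matrix (Fin d) (Fin d) ℝ} (hM : M.PosSemidef)
    (u : Fin d → ℝ) : 0 ≤ u ⬝ᵥ M *ᵥ u := by
  simpa using hM.dotProduct_mulVec_nonneg u
end helpers
section helpers2
variable {d : ℕ}

lemma quad_expand {M : Matrix (Fin d) (Fin d) ℝ} (hM : M.IsHermitian)
    (u w : Fin d → ℝ) (t : ℝ) :
    (u + t • w) ⬝ᵥ M *ᵥ (u + t • w)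
      = (w ⬝ᵥ M *ᵥ w) * t ^ 2 + (2 * (u ⬝ᵥ M *ᵥ w)) * t + u ⬝ᵥ M *ᵥ u := by
  have h := herm_swap hM u w
  simp [Matrix.mulVec_add, Matrix.mulVec_smul, add_dotProduct,
    smul_dotProduct, dotProduct_add, dotProduct_smul,
    smul_eq_mul]
  rw [h]; ring

lemma psd_cs {M : Matrix (Fin d) (Fin d) ℝ} (hM : M.PosSemidef)
    (u w : Fin d → ℝ) :
    u ⬝ᵥ M *ᵥ w ≤ Real.sqrt (u ⬝ᵥ M *ᵥ u) * Real.sqrt (w ⬝ᵥ M *ᵥ w) := by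
  have hq : ∀ t : ℝ, 0 ≤ (w ⬝ᵥ M *ᵥ w) * (t * t) + (2 * (u ⬝ᵥ M *ᵥ w)) * t + u ⬝ᵥ M *ᵥ u := by
    intro t
    have h0 := psd_nonneg hM (u + t • w)
    rw [quad_expand hM.1 u w t] at h0
    nlinarith [h0]
  have hd := discrim_le_zero hq
  simp only [discrim] at hd
  have h1 : (u ⬝ᵥ M *ᵥ w) ^ 2 ≤ (u ⬝ᵥ M *ᵥ u) * (w ⬝ᵥ M *ᵥ w) := by nlinarith
  calc u ⬝ᵥ M *ᵥ w ≤ |u ⬝ᵥ M *ᵥ w| := le_abs_self _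
    _ = Real.sqrt ((u ⬝ᵥ M *ᵥ w) ^ 2) := (Real.sqrt_sq_eq_abs _).symm
    _ ≤ Real.sqrt ((u ⬝ᵥ M *ᵥ u) * (w ⬝ᵥ M *ᵥ w)) := Real.sqrt_le_sqrt h1
    _ = _ := Real.sqrt_mul (psd_nonneg hM u) _

lemma psd_triangle {M : Matrix (Fin d) (Fin d) ℝ} (hM : M.PosSemidef)
    (u w : Fin d → ℝ) :
    Real.sqrt ((u + w) ⬝ᵥ M *ᵥ (u + w))
      ≤ Real.sqrt (u ⬝ᵥ M *ᵥ u) + Real.sqrt (w ⬝ᵥ M *ᵥ w) := by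
  have hcs := psd_cs hM u w
  have hu := psd_nonneg hM u
  have hw := psd_nonneg hM w
  have hsu := Real.sq_sqrt hu
  have hsw := Real.sq_sqrt hw
  have hexp : (u + w) ⬝ᵥ M *ᵥ (u + w)
      = u ⬝ᵥ M *ᵥ u + 2 * (u ⬝ᵥ M *ᵥ w) + w ⬝ᵥ M *ᵥ w := by
    have := quad_expand hM.1 u w 1
    simpa using this.trans (by ring)
  have hle : (u + w) ⬝ᵥ M *ᵥ (u + w)
      ≤ (Real.sqrt (u ⬝ᵥ M *ᵥ u) + Real.sqrt (w ⬝ᵥ M *ᵥ w)) ^ 2 := by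
    rw [hexp]; nlinarith
  calc Real.sqrt ((u + w) ⬝ᵥ M *ᵥ (u + w))
      ≤ Real.sqrt ((Real.sqrt (u ⬝ᵥ M *ᵥ u) + Real.sqrt (w ⬝ᵥ M *ᵥ w)) ^ 2) :=
        Real.sqrt_le_sqrt hle
    _ = _ := by
        rw [Real.sqrt_sq (by positivity)]
end helpers2

section helpers3
variable {d : ℕ}

lemma dual_bound {M : Matrix (Fin d) (Fin d) ℝ} (hM : M.PosDef)
    {u : Fin d → ℝ} {C : ℝ} (hC : 0 ≤ C)
    (h : ∀ w : Fin d → ℝ, u ⬝ᵥ w ≤ C * Real.sqrt (w ⬝ᵥ M *ᵥ w)) :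
    Real.sqrt (u ⬝ᵥ M⁻¹ *ᵥ u) ≤ C := by
  set z := M⁻¹ *ᵥ u with hz
  have hdet : IsUnit M.det := isUnit_iff_ne_zero.mpr hM.det_pos.ne'
  have hMz : M *ᵥ z = u := by
    rw [hz, Matrix.mulVec_mulVec, Matrix.mul_nonsing_inv _ hdet, Matrix.one_mulVec]
  have hq0 : 0 ≤ u ⬝ᵥ z := by
    have := psd_nonneg hM.posSemidef z
    rwa [hMz, dotProduct_comm] at this
  have hqz : z ⬝ᵥ M *ᵥ z = u ⬝ᵥ z := by rw [hMz, dotProduct_comm]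
  have hle : u ⬝ᵥ z ≤ C * Real.sqrt (u ⬝ᵥ z) := by
    have := h z
    rwa [hqz] at this
  have hsq : Real.sqrt (u ⬝ᵥ z) * Real.sqrt (u ⬝ᵥ z) = u ⬝ᵥ z :=
    Real.mul_self_sqrt hq0
  rcases (Real.sqrt_nonneg (u ⬝ᵥ z)).eq_or_lt with h0 | hpos
  · rw [show u ⬝ᵥ M⁻¹ *ᵥ u = u ⬝ᵥ z from rfl, ← h0]; exact hC
  · have : Real.sqrt (u ⬝ᵥ z) * Real.sqrt (u ⬝ᵥ z) ≤ C * Real.sqrt (u ⬝ᵥ z) := by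
      rw [hsq]; exact hle
    exact le_of_mul_le_mul_right this hpos
end helpers3

section helpers4
variable {d : ℕ}

lemma bilin_expand {S : Matrix (Fin d) (Fin d) ℝ} (hS : S.IsHermitian)
    (v w : Fin d → ℝ) (s t : ℝ) :
    (s • v + t • w) ⬝ᵥ S *ᵥ (s • v + t • w)
      = s * s * (v ⬝ᵥ S *ᵥ v) + 2 * s * t * (w ⬝ᵥ S *ᵥ v) + t * t * (w ⬝ᵥ S *ᵥ w) := by
  have h := herm_swap hS v w
  simp only [Matrix.mulVec_add, Matrix.mulVec_smul, dotProduct_add,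
    dotProduct_smul, add_dotProduct, smul_dotProduct, smul_eq_mul]
  rw [h]; ring

lemma sym_cs {M S : Matrix (Fin d) (Fin d) ℝ} (hM : M.PosDef) (hS : S.IsHermitian)
    {c : ℝ}
    (hup : ∀ u : Fin d → ℝ, u ⬝ᵥ S *ᵥ u ≤ c * (u ⬝ᵥ M *ᵥ u))
    (hlo : ∀ u : Fin d → ℝ, -(c * (u ⬝ᵥ M *ᵥ u)) ≤ u ⬝ᵥ S *ᵥ u)
    (v w : Fin d → ℝ) :
    w ⬝ᵥ S *ᵥ v ≤ c * (Real.sqrt (v ⬝ᵥ M *ᵥ v) * Real.sqrt (w ⬝ᵥ M *ᵥ w)) := by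
  by_cases hv : v = 0
  · simp [hv]
  by_cases hw : w = 0
  · simp [hw]
  set a := Real.sqrt (v ⬝ᵥ M *ᵥ v) with ha
  set b := Real.sqrt (w ⬝ᵥ M *ᵥ w) with hb
  have hva : 0 < v ⬝ᵥ M *ᵥ v := by simpa using hM.dotProduct_mulVec_pos hv
  have hwb : 0 < w ⬝ᵥ M *ᵥ w := by simpa using hM.dotProduct_mulVec_pos hw
  have ha0 : 0 < a := Real.sqrt_pos.mpr hva
  have hb0 : 0 < b := Real.sqrt_pos.mpr hwb
  have ha2 : a * a = v ⬝ᵥ M *ᵥ v := Real.mul_self_sqrt hva.le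
  have hb2 : b * b = w ⬝ᵥ M *ᵥ w := Real.mul_self_sqrt hwb.le
  have eS1 := bilin_expand hS v w b a
  have eS2 := bilin_expand hS v w b (-a)
  have eM1 := bilin_expand hM.1 v w b a
  have eM2 := bilin_expand hM.1 v w b (-a)
  have h1 := hup (b • v + a • w)
  have h2 := hlo (b • v + (-a) • w)
  rw [eS1, eM1] at h1
  rw [eS2, eM2] at h2
  rw [← ha2, ← hb2] at h1 h2
  nlinarith [mul_pos ha0 hb0, h1, h2]
end helpers4

@[simp] lemma dotCLM_apply {d : ℕ} (w u : Fin d → ℝ) : dotCLM w u = w ⬝ᵥ u := rfl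

set_option maxHeartbeats 1600000

@[simp] lemma mulVecCLM_apply {d : ℕ} (M : Matrix (Fin d) (Fin d) ℝ) (u : Fin d → ℝ) :
    mulVecCLM M u = M *ᵥ u := rfl

/-- Inequality (intermediateboundnewtondecrement) from the proof of Lemma 3:
under the self-concordance sandwich relation, the Newton decrement at `x + v`
satisfies `λ_f(x+v) ≤ ((1+ε')λ² + ε'λ)/(1 - (1+ε')λ)²`. -/
theorem intermediate_newton_decrement_bound
    (d : ℕ) (hd : 1 ≤ d)
    (f : (Fin d → ℝ) → ℝ)
    (gradf : (Fin d → ℝ) → (Fin d → ℝ))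
    (Hess : (Fin d → ℝ) → Matrix (Fin d) (Fin d) ℝ)
    (hf : ContDiff ℝ 2 f)
    (hgrad : ∀ y, HasFDerivAt f (dotCLM (gradf y)) y)
    (hhess : ∀ y, HasFDerivAt gradf (mulVecCLM (Hess y)) y)
    (x v vne : Fin d → ℝ) (ε' : ℝ) (hε' : 0 ≤ ε')
    (hHx : (Hess x).PosDef) (hHxv : (Hess (x + v)).PosDef)
    (hvne : Hess x *ᵥ vne = -gradf x)
    (lam : ℝ) (hlam : lam = Real.sqrt (vne ⬝ᵥ (Hess x *ᵥ vne)))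
    (hstep : (1 + ε') * lam < 1)
    (hclose : Real.sqrt ((v - vne) ⬝ᵥ (Hess x *ᵥ (v - vne))) ≤ ε' * lam)
    (hsand : ∀ s ∈ Set.Icc (0 : ℝ) 1,
      (Hess (x + s • v) - (1 - s * ((1 + ε') * lam)) ^ 2 • Hess x).PosSemidef ∧
      (((1 - s * ((1 + ε') * lam)) ^ 2)⁻¹ • Hess x - Hess (x + s • v)).PosSemidef) :
    Real.sqrt (gradf (x + v) ⬝ᵥ ((Hess (x + v))⁻¹ *ᵥ gradf (x + v))) ≤
      ((1 + ε') * lam ^ 2 + ε' * lam) / (1 - (1 + ε') * lam) ^ 2 := by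
  -- Basic numeric facts
  have hlam0 : 0 ≤ lam := hlam ▸ Real.sqrt_nonneg _
  set α : ℝ := (1 + ε') * lam with hαdef
  have hα0 : 0 ≤ α := by positivity
  have hα1 : α < 1 := hstep
  have hβ : (0:ℝ) < 1 - α := by linarith
  -- gradf is C¹, hence Hess is continuous along the segment
  have hgradeq : gradf = fun y i => (fderiv ℝ f y) (Pi.single i 1) := by
    funext y i
    rw [(hgrad y).fderiv, dotCLM_apply]
    simp [dotProduct_single]
  have hg1 : ContDiff ℝ 1 gradf := by
    rw [hgradeq]
    refine contDiff_pi.mpr fun i => ?_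
    exact (hf.fderiv_right (le_refl _)).clm_apply contDiff_const
  have hfd : ∀ y, fderiv ℝ gradf y = mulVecCLM (Hess y) := fun y => (hhess y).fderiv
  have hHvc : Continuous fun s : ℝ => Hess (x + s • v) *ᵥ v := by
    have hline : Continuous fun s : ℝ => x + s • v := by continuity
    have h1 : Continuous fun s : ℝ => (fderiv ℝ gradf (x + s • v)) v := by
      exact ((ContinuousLinearMap.apply ℝ (Fin d → ℝ) v).continuous.comp
        ((hg1.continuous_fderiv one_ne_zero).comp hline))
    refine h1.congr fun s => ?_
    rw [hfd, mulVecCLM_apply]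
  -- Fundamental theorem of calculus
  have hintg : IntervalIntegrable (fun s : ℝ => Hess (x + s • v) *ᵥ v)
      MeasureTheory.volume 0 1 := hHvc.intervalIntegrable 0 1
  have hkey : gradf (x + v) - gradf x = ∫ s in (0:ℝ)..1, Hess (x + s • v) *ᵥ v := by
    have hderiv : ∀ s ∈ Set.uIcc (0:ℝ) 1,
        HasDerivAt (fun t : ℝ => gradf (x + t • v)) (Hess (x + s • v) *ᵥ v) s := by
      intro s _
      have h1 : HasDerivAt (fun t : ℝ => x + t • v) v s := by
        simpa using (((hasDerivAt_id s).smul_const v).const_add x)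
      have h2 := (hhess (x + s • v)).comp_hasDerivAt s h1
      simpa only [mulVecCLM_apply, Function.comp_def] using h2
    have := intervalIntegral.integral_eq_sub_of_hasDerivAt hderiv hintg
    rw [this]
    norm_num
  -- notation
  set Hx := Hess x with hHxdef
  set Hp := Hess (x + v) with hHpdef
  set g := gradf (x + v) with hgdef
  set nv := Real.sqrt (v ⬝ᵥ Hx *ᵥ v) with hnv
  have hnv0 : 0 ≤ nv := Real.sqrt_nonneg _
  -- ‖v‖ ≤ (1+ε')lam
  have hnvle : nv ≤ (1 + ε') * lam := by
    have h1 : nv ≤ Real.sqrt ((v - vne) ⬝ᵥ Hx *ᵥ (v - vne))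
        + Real.sqrt (vne ⬝ᵥ Hx *ᵥ vne) := by
      have := psd_triangle hHx.posSemidef (v - vne) vne
      simpa using this
    rw [← hlam] at h1
    have := hclose
    nlinarith
  -- sandwich at s = 1
  have hs1 := hsand 1 (by norm_num)
  have hsub1 : x + (1:ℝ) • v = x + v := by rw [one_smul]
  -- main per-vector bound
  set C : ℝ := ((1 + ε') * lam ^ 2 + ε' * lam) / (1 - (1 + ε') * lam) ^ 2 with hC
  have hC0 : 0 ≤ C := by
    apply div_nonneg
    · positivity
    · positivity
  have hmain : ∀ w : Fin d → ℝ, g ⬝ᵥ w ≤ C * Real.sqrt (w ⬝ᵥ Hp *ᵥ w) := by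
    intro w
    set nw := Real.sqrt (w ⬝ᵥ Hx *ᵥ w) with hnw
    have hnw0 : 0 ≤ nw := Real.sqrt_nonneg _
    -- split of gradient
    have hsplit : g ⬝ᵥ w = gradf x ⬝ᵥ w
        + ∫ s in (0:ℝ)..1, (Hess (x + s • v) *ᵥ v) ⬝ᵥ w := by
      have hinter : (∫ s in (0:ℝ)..1, Hess (x + s • v) *ᵥ v) ⬝ᵥ w
          = ∫ s in (0:ℝ)..1, (Hess (x + s • v) *ᵥ v) ⬝ᵥ w := by
        have h1 := (dotCLM w).intervalIntegral_comp_comm hintg (a := 0) (b := 1)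
        have h2 : ∀ u : Fin d → ℝ, dotCLM w u = u ⬝ᵥ w := fun u => by
          rw [dotCLM_apply]; exact dotProduct_comm w u
        calc (∫ s in (0:ℝ)..1, Hess (x + s • v) *ᵥ v) ⬝ᵥ w
            = dotCLM w (∫ s in (0:ℝ)..1, Hess (x + s • v) *ᵥ v) := (h2 _).symm
          _ = ∫ s in (0:ℝ)..1, dotCLM w (Hess (x + s • v) *ᵥ v) := h1.symm
          _ = ∫ s in (0:ℝ)..1, (Hess (x + s • v) *ᵥ v) ⬝ᵥ w :=
              intervalIntegral.integral_congr fun s _ => h2 _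
      have := congrArg (fun u => u ⬝ᵥ w) hkey
      simp only [sub_dotProduct] at this
      rw [hinter] at this
      linarith
    -- pointwise bound for the integrand
    set Cw : ℝ := (Hx *ᵥ v) ⬝ᵥ w with hCw
    have hpt : ∀ s ∈ Set.Icc (0:ℝ) 1,
        (Hess (x + s • v) *ᵥ v) ⬝ᵥ w
          ≤ (((1 - s * α) ^ 2)⁻¹ - 1) * (nv * nw) + Cw := by
      intro s hs
      obtain ⟨hs0, hs1'⟩ := hs
      have hsα : s * α ≤ α := by nlinarith
      have hcpos : (0:ℝ) < 1 - s * α := by linarith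
      set c : ℝ := (1 - s * α) ^ 2 with hc
      have hc0 : 0 < c := by positivity
      obtain ⟨P1, P2⟩ := hsand s ⟨hs0, hs1'⟩
      set Hs := Hess (x + s • v) with hHs
      -- Hs is hermitian
      have hHsherm : Hs.IsHermitian := by
        have h1 : (Hs - c • Hx).IsHermitian := P1.1
        have h2 : (c • Hx).IsHermitian := by
          have := hHx.1
          simp only [Matrix.IsHermitian, Matrix.conjTranspose_smul, star_trivial] at *
          rw [this]
        have := h1.add h2
        simpa using this
      have hSherm : (Hs - Hx).IsHermitian := hHsherm.sub hHx.1
      -- quadratic form bounds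
      have hup : ∀ u : Fin d → ℝ, u ⬝ᵥ (Hs - Hx) *ᵥ u ≤ (c⁻¹ - 1) * (u ⬝ᵥ Hx *ᵥ u) := by
        intro u
        have h1 := psd_nonneg P2 u
        simp only [Matrix.sub_mulVec, Matrix.smul_mulVec, dotProduct_sub,
          dotProduct_smul, smul_eq_mul] at h1 ⊢
        linarith
      have hlo : ∀ u : Fin d → ℝ, -((c⁻¹ - 1) * (u ⬝ᵥ Hx *ᵥ u)) ≤ u ⬝ᵥ (Hs - Hx) *ᵥ u := by
        intro u
        have h1 := psd_nonneg P1 u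
        have h2 := psd_nonneg hHx.posSemidef u
        have h3 : c + c⁻¹ - 2 ≥ 0 := by
          have h4 : c * (c + c⁻¹ - 2) = (c - 1) ^ 2 := by
            field_simp
            ring
          nlinarith [sq_nonneg (c - 1)]
        simp only [Matrix.sub_mulVec, Matrix.smul_mulVec, dotProduct_sub,
          dotProduct_smul, smul_eq_mul] at h1 ⊢
        nlinarith
      have hcs := sym_cs hHx hSherm hup hlo v w
      have hsw : (Hs *ᵥ v) ⬝ᵥ w = w ⬝ᵥ (Hs - Hx) *ᵥ v + Cw := by
        rw [dotProduct_comm]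
        simp only [Matrix.sub_mulVec, dotProduct_sub, hCw]
        rw [dotProduct_comm w (Hx *ᵥ v)]
        ring
      rw [hsw]
      have := hcs
      rw [← hnv, ← hnw] at this
      linarith
    -- integrate the bound
    have hψcont : ContinuousOn
        (fun s : ℝ => (((1 - s * α) ^ 2)⁻¹ - 1) * (nv * nw) + Cw)
        (Set.uIcc (0:ℝ) 1) := by
      rw [Set.uIcc_of_le (by norm_num : (0:ℝ) ≤ 1)]
      have h1 : ∀ s ∈ Set.Icc (0:ℝ) 1, (1 - s * α) ^ 2 ≠ 0 := by
        intro s hs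
        have h2 : s * α ≤ α := by nlinarith [hs.1, hs.2]
        have h3 : (0:ℝ) < 1 - s * α := by linarith
        positivity
      exact (((((continuous_const.sub (continuous_id.mul continuous_const)).pow
        2).continuousOn.inv₀ h1).sub continuousOn_const).mul continuousOn_const).add
        continuousOn_const
    have hψint : IntervalIntegrable
        (fun s : ℝ => (((1 - s * α) ^ 2)⁻¹ - 1) * (nv * nw) + Cw)
        MeasureTheory.volume 0 1 := hψcont.intervalIntegrable
    have hφint : IntervalIntegrable
        (fun s : ℝ => (Hess (x + s • v) *ᵥ v) ⬝ᵥ w) MeasureTheory.volume 0 1 := by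
      apply Continuous.intervalIntegrable
      have h1 := (dotCLM w).continuous.comp hHvc
      refine h1.congr fun s => ?_
      simp only [Function.comp_apply, dotCLM_apply]
      exact dotProduct_comm _ _
    have hmono : (∫ s in (0:ℝ)..1, (Hess (x + s • v) *ᵥ v) ⬝ᵥ w)
        ≤ ∫ s in (0:ℝ)..1, ((((1 - s * α) ^ 2)⁻¹ - 1) * (nv * nw) + Cw) :=
      intervalIntegral.integral_mono_on (by norm_num) hφint hψint hpt
    -- compute the right integral via FTC
    have hFTC : (∫ s in (0:ℝ)..1, ((((1 - s * α) ^ 2)⁻¹ - 1) * (nv * nw) + Cw))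
        = ((1 - α)⁻¹ - 1) * (nv * nw) + Cw := by
      have hF : ∀ s ∈ Set.uIcc (0:ℝ) 1,
          HasDerivAt (fun t : ℝ => (t / (1 - t * α) - t) * (nv * nw) + t * Cw)
            ((((1 - s * α) ^ 2)⁻¹ - 1) * (nv * nw) + Cw) s := by
        intro s hs
        rw [Set.uIcc_of_le (by norm_num : (0:ℝ) ≤ 1)] at hs
        have hsα : s * α ≤ α := by nlinarith [hs.1, hs.2]
        have hne : 1 - s * α ≠ 0 := by
          have : (0:ℝ) < 1 - s * α := by linarith
          exact this.ne'
        have h1 : HasDerivAt (fun t : ℝ => t / (1 - t * α))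
            ((1 * (1 - s * α) - s * (0 - 1 * α)) / (1 - s * α) ^ 2) s :=
          (hasDerivAt_id s).div
            ((hasDerivAt_const s 1).sub ((hasDerivAt_id s).mul_const α)) hne
        have h2 : (1 * (1 - s * α) - s * (0 - 1 * α)) / (1 - s * α) ^ 2
            = ((1 - s * α) ^ 2)⁻¹ := by
          rw [div_eq_iff (by positivity)]
          field_simp
          ring
        rw [h2] at h1
        have h3 : HasDerivAt (fun t : ℝ => t / (1 - t * α) - t)
            (((1 - s * α) ^ 2)⁻¹ - 1) s := h1.sub (hasDerivAt_id s)
        have h4 := (h3.mul_const (nv * nw)).add ((hasDerivAt_id s).mul_const Cw)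
        exact h4.congr_deriv (by ring)
      have := intervalIntegral.integral_eq_sub_of_hasDerivAt hF hψint
      rw [this]
      norm_num
    -- gradient at x
    have hgx : gradf x ⬝ᵥ w + Cw = w ⬝ᵥ Hx *ᵥ (v - vne) := by
      have h1 : gradf x = -(Hx *ᵥ vne) := by rw [hvne]; ring_nf
      rw [h1, hCw, Matrix.mulVec_sub, dotProduct_sub,
        dotProduct_comm w (Hx *ᵥ v), dotProduct_comm w (Hx *ᵥ vne)]
      simp only [neg_dotProduct]
      ring
    have hgxb : gradf x ⬝ᵥ w + Cw ≤ ε' * lam * nw := by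
      rw [hgx]
      have h1 := psd_cs hHx.posSemidef w (v - vne)
      have h2 : Real.sqrt ((v - vne) ⬝ᵥ Hx *ᵥ (v - vne)) ≤ ε' * lam := hclose
      have h3 : 0 ≤ Real.sqrt ((v - vne) ⬝ᵥ Hx *ᵥ (v - vne)) := Real.sqrt_nonneg _
      calc w ⬝ᵥ Hx *ᵥ (v - vne) ≤ nw * Real.sqrt ((v - vne) ⬝ᵥ Hx *ᵥ (v - vne)) := h1
        _ ≤ nw * (ε' * lam) := by nlinarith
        _ = ε' * lam * nw := by ring
    -- combine
    have hKpos : 0 ≤ (1 - α)⁻¹ - 1 := by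
      nlinarith [mul_inv_cancel₀ hβ.ne', inv_nonneg.mpr hβ.le, hα0]
    have hstep1 : g ⬝ᵥ w ≤ (((1 - α)⁻¹ - 1) * ((1 + ε') * lam) + ε' * lam) * nw := by
      rw [hsplit]
      have h1 : (∫ s in (0:ℝ)..1, (Hess (x + s • v) *ᵥ v) ⬝ᵥ w)
          ≤ ((1 - α)⁻¹ - 1) * (nv * nw) + Cw := by rw [← hFTC]; exact hmono
      have h2 : ((1 - α)⁻¹ - 1) * (nv * nw) ≤ ((1 - α)⁻¹ - 1) * ((1 + ε') * lam) * nw := by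
        have := mul_le_mul_of_nonneg_right hnvle hnw0
        nlinarith
      nlinarith [hgxb]
    -- compare Hx-norm with Hp-norm
    have hnwHp : (1 - α) * nw ≤ Real.sqrt (w ⬝ᵥ Hp *ᵥ w) := by
      have hP := (hsand 1 (by norm_num)).1
      rw [hsub1] at hP
      have h1 := psd_nonneg hP w
      simp only [Matrix.sub_mulVec, Matrix.smul_mulVec, dotProduct_sub,
        dotProduct_smul, smul_eq_mul, one_mul] at h1
      have h2 : (1 - α) ^ 2 * (w ⬝ᵥ Hx *ᵥ w) ≤ w ⬝ᵥ Hp *ᵥ w := by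
        rw [← hHpdef] at h1
        nlinarith [h1]
      have h3 : (1 - α) * nw = Real.sqrt ((1 - α) ^ 2 * (w ⬝ᵥ Hx *ᵥ w)) := by
        rw [Real.sqrt_mul (by positivity), Real.sqrt_sq hβ.le]
      rw [h3]
      exact Real.sqrt_le_sqrt h2
    have hK0 : 0 ≤ ((1 - α)⁻¹ - 1) * ((1 + ε') * lam) + ε' * lam := by positivity
    have hfin : (((1 - α)⁻¹ - 1) * ((1 + ε') * lam) + ε' * lam) * nw
        ≤ C * Real.sqrt (w ⬝ᵥ Hp *ᵥ w) := by
      have hCeq : C = ((((1 - α)⁻¹ - 1) * ((1 + ε') * lam) + ε' * lam)) * (1 - α)⁻¹ := by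
        rw [hC, hαdef]
        have hne : 1 - (1 + ε') * lam ≠ 0 := hβ.ne'
        field_simp
        ring
      rw [hCeq]
      have h1 : nw ≤ (1 - α)⁻¹ * Real.sqrt (w ⬝ᵥ Hp *ᵥ w) := by
        rw [le_inv_mul_iff₀ hβ] -- (1-α) * nw ≤ √
        linarith [hnwHp]
      calc (((1 - α)⁻¹ - 1) * ((1 + ε') * lam) + ε' * lam) * nw
          ≤ (((1 - α)⁻¹ - 1) * ((1 + ε') * lam) + ε' * lam)
            * ((1 - α)⁻¹ * Real.sqrt (w ⬝ᵥ Hp *ᵥ w)) :=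
            mul_le_mul_of_nonneg_left h1 hK0
        _ = _ := by ring
    linarith [hstep1, hfin]
  exact dual_bound hHxv hC0 hmain
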